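/- (Key step in the proof of F_co ⊆ F_ui) Suppose Gq is bounded and K_q is compact on ℰ_b, and let (A_M)_{M∈ℕ} be measurable subsets of E with A_M ↓ ∅ (decreasing with empty intersection). Then G(1_{A_M} q) → 0 uniformly on E as M → ∞; i.e. sup_{x∈E} ∫_{A_M} G(x,y) q(y) dμ(y) → 0. -/

import Mathlib

open MeasureTheory ENNReal NNReal Filter

/-- `Gop μ G q x = ∫ G(x,y) q(y) dμ(y)`. -/
noncomputable def Gop {E : Type*} [MeasurableSpace E] (μ : Measure E)
    (G : E → E → ℝ≥0∞) (q : E → ℝ≥0∞) (x : E) : ℝ≥0∞ :=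
  ∫⁻ y, G x y * q y ∂μ

/-- The kernel operator `K_q f x = ∫ G(x,y) f(y) q(y) dμ(y)` acting on real functions. -/
noncomputable def Kq {E : Type*} [MeasurableSpace E] (μ : Measure E)
    (G : E → E → ℝ≥0∞) (q : E → ℝ≥0∞) (f : E → ℝ) (x : E) : ℝ :=
  ∫ y, (G x y * q y).toReal * f y ∂μ

/-- Compactness of `K_q` on the space of bounded measurable functions with sup-norm:
the image of the unit ball is totally bounded for the uniformity of uniform convergence. -/
def KqCompact {E : Type*} [MeasurableSpace E] (μ : Measure E)
    (G : E → E → ℝ≥0∞) (q : E → ℝ≥0∞) : Prop :=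
  TotallyBounded ((fun f => UniformFun.ofFun (Kq μ G q f)) ''
    {f : E → ℝ | Measurable f ∧ ∀ x, |f x| ≤ 1})

/-- `q ∈ F_co(G)`: `q` measurable, `Gq` bounded and `K_q` compact on `ℰ_b`. -/
def MemFco {E : Type*} [MeasurableSpace E] (μ : Measure E)
    (G : E → E → ℝ≥0∞) (q : E → ℝ≥0∞) : Prop :=
  Measurable q ∧ (∃ M : ℝ≥0, ∀ x, Gop μ G q x ≤ M) ∧ KqCompact μ G q

/-- `q ∈ F_ui(G)`: `q` measurable and `{G(x,·)q : x ∈ E}` is uniformly integrable. -/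
def MemFui {E : Type*} [MeasurableSpace E] (μ : Measure E)
    (G : E → E → ℝ≥0∞) (q : E → ℝ≥0∞) : Prop :=
  Measurable q ∧ ∀ ε : ℝ≥0∞, 0 < ε → ∃ g : E → ℝ≥0∞, Measurable g ∧
    (∫⁻ y, g y ∂μ) < ⊤ ∧
    ∀ x : E, (∫⁻ y in {y | g y ≤ G x y * q y}, G x y * q y ∂μ) ≤ ε

/-- key step: if `Gq` is bounded, `K_q` is compact and `A_M ↓ ∅`,
then `sup_x ∫_{A_M} G(x,y) q(y) dμ(y) → 0`. -/
theorem stmt9 {E : Type*} [MeasurableSpace E] (μ : Measure E)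
    (G : E → E → ℝ≥0∞) (hG : Measurable (Function.uncurry G))
    (q : E → ℝ≥0∞) (hq : Measurable q)
    (hM : ∃ M : ℝ≥0, ∀ x, Gop μ G q x ≤ M) (hK : KqCompact μ G q)
    (A : ℕ → Set E) (hAmeas : ∀ n, MeasurableSet (A n))
    (hmono : Antitone A) (hempty : (⋂ n, A n) = ∅) :
    Tendsto (fun n : ℕ => ⨆ x : E, ∫⁻ y in A n, G x y * q y ∂μ)
      atTop (nhds 0) := by
  obtain ⟨M, hMb⟩ := hM
  set L : ℕ → E → ℝ≥0∞ := fun n x => ∫⁻ y in A n, G x y * q y ∂μ with hLdef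
  have hGm : ∀ x, Measurable (fun y => G x y * q y) := fun x =>
    (hG.comp measurable_prodMk_left).mul hq
  have hGfin : ∀ x, (∫⁻ y, G x y * q y ∂μ) ≠ ⊤ := fun x =>
    ((hMb x).trans_lt coe_lt_top).ne
  have hLle : ∀ n x, L n x ≤ (M : ℝ≥0∞) := fun n x =>
    le_trans (setLIntegral_le_lintegral _ _) (hMb x)
  have hLne : ∀ n x, L n x ≠ ⊤ := fun n x => ((hLle n x).trans_lt coe_lt_top).ne
  set f : ℕ → E → ℝ := fun n => (A n).indicator 1 with hfdef
  have hfmem : ∀ n, f n ∈ {g : E → ℝ | Measurable g ∧ ∀ x, |g x| ≤ 1} := by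
    intro n
    refine ⟨measurable_one.indicator (hAmeas n), fun x => ?_⟩
    by_cases hx : x ∈ A n <;> simp [hfdef, hx]
  have hKqeq : ∀ n x, Kq μ G q (f n) x = (L n x).toReal := by
    intro n x
    have hae : ∀ᵐ y ∂μ, (A n).indicator (fun y => G x y * q y) y < ⊤ := by
      filter_upwards [ae_lt_top (hGm x) (hGfin x)] with y hy
      exact lt_of_le_of_lt (Set.indicator_le_self _ _ y) hy
    have heq : (fun y => (G x y * q y).toReal * f n y)
        = fun y => ((A n).indicator (fun y => G x y * q y) y).toReal := by
      funext y
      by_cases hy : y ∈ A n <;> simp [hfdef, hy]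
    rw [Kq, heq, integral_toReal (((hGm x).indicator (hAmeas n)).aemeasurable) hae,
      lintegral_indicator (hAmeas n)]
  have hpt : ∀ x, Tendsto (fun n => L n x) atTop (nhds 0) := by
    intro x
    have hrw : ∀ n, L n x = ∫⁻ y, (A n).indicator (fun y => G x y * q y) y ∂μ :=
      fun n => (lintegral_indicator (hAmeas n) _).symm
    have h0 : (∫⁻ y, (A 0).indicator (fun y => G x y * q y) y ∂μ) ≠ ⊤ := by
      rw [lintegral_indicator (hAmeas 0)]; exact hLne 0 x
    have hanti : ∀ᵐ y ∂μ, Antitone fun n => (A n).indicator (fun y => G x y * q y) y := by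
      refine Eventually.of_forall fun y i j hij => ?_
      exact Set.indicator_le_indicator_of_subset (hmono hij) (fun _ => zero_le) y
    have htend : ∀ᵐ y ∂μ, Tendsto (fun n => (A n).indicator (fun y => G x y * q y) y)
        atTop (nhds ((0 : E → ℝ≥0∞) y)) := by
      refine Eventually.of_forall fun y => ?_
      have hy : ∃ N, y ∉ A N := by
        by_contra hcon
        push_neg at hcon
        have : y ∈ ⋂ n, A n := Set.mem_iInter.mpr hcon
        simp [hempty] at this
      obtain ⟨N, hN⟩ := hy
      have : ∀ n ≥ N, (A n).indicator (fun y => G x y * q y) y = 0 := by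
        intro n hn
        exact Set.indicator_of_notMem (fun h => hN (hmono hn h)) _
      refine Tendsto.congr' ?_ tendsto_const_nhds
      filter_upwards [eventually_ge_atTop N] with n hn using (this n hn).symm
    have := lintegral_tendsto_of_tendsto_of_antitone
      (fun n => ((hGm x).indicator (hAmeas n)).aemeasurable) hanti h0 htend
    simp only [Pi.zero_apply, lintegral_zero] at this
    exact Tendsto.congr (fun n => (hrw n).symm) this
  have hptR : ∀ x, Tendsto (fun n => (L n x).toReal) atTop (nhds 0) := by
    intro x
    have := (ENNReal.tendsto_toReal (a := 0) (by simp)).comp (hpt x)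
    simpa [Function.comp_def] using this
  rw [ENNReal.tendsto_nhds_zero]
  intro ε' hε'
  set δ : ℝ := (min 1 ε').toReal / 4 with hδdef
  have hmin_ne : min 1 ε' ≠ ⊤ := ne_top_of_le_ne_top one_ne_top (min_le_left _ _)
  have hmin_pos : 0 < min 1 ε' := lt_min one_pos hε'
  have hδ : 0 < δ := by
    have := ENNReal.toReal_pos hmin_pos.ne' hmin_ne
    positivity
  have hV : {p : ℝ × ℝ | dist p.1 p.2 < δ} ∈ uniformity ℝ := Metric.dist_mem_uniformity hδ
  obtain ⟨t, htf, htsub⟩ := hK _ ((UniformFun.hasBasis_uniformity E ℝ).mem_of_mem hV)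
  have hmem : ∀ n, ∃ c ∈ t, ∀ x, dist (UniformFun.toFun c x) (Kq μ G q (f n) x) < δ := by
    intro n
    have := htsub (Set.mem_image_of_mem _ (hfmem n))
    obtain ⟨c, hct, hc⟩ := Set.mem_iUnion₂.mp this
    refine ⟨c, hct, fun x => ?_⟩
    have h := hc x
    simp only [Set.mem_setOf_eq] at h
    rw [dist_comm]
    exact h
  choose c hct hc using hmem
  have hpigeon : ∃ c0 ∈ t, ∃ᶠ n in atTop, c n = c0 := by
    by_contra hcon
    push_neg at hcon
    have : ∀ᶠ n in atTop, ∀ c0 ∈ t, c n ≠ c0 :=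
      (eventually_all_finite htf).mpr fun c0 hc0 => hcon c0 hc0
    obtain ⟨n, hn⟩ := this.exists
    exact hn (c n) (hct n) rfl
  obtain ⟨c0, _, hfreq⟩ := hpigeon
  have hc0bd : ∀ x, |UniformFun.toFun c0 x| ≤ 2 * δ := by
    intro x
    have hev : ∀ᶠ n in atTop, (L n x).toReal < δ :=
      (hptR x).eventually (eventually_lt_nhds hδ)
    obtain ⟨n, hcn, hLn⟩ := (hfreq.and_eventually hev).exists
    have hdist : dist (UniformFun.toFun c0 x) ((L n x).toReal) < δ := by
      rw [← hcn]
      have := hc n x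
      rwa [hKqeq n x] at this
    calc |UniformFun.toFun c0 x|
        ≤ dist (UniformFun.toFun c0 x) ((L n x).toReal) + |(L n x).toReal| := by
          rw [Real.dist_eq]
          have := abs_sub_abs_le_abs_sub (UniformFun.toFun c0 x) ((L n x).toReal)
          linarith [abs_nonneg ((L n x).toReal)]
      _ ≤ 2 * δ := by
          have h1 : |(L n x).toReal| = (L n x).toReal := abs_of_nonneg toReal_nonneg
          linarith [hdist, h1 ▸ hLn]
  obtain ⟨n0, hn0⟩ := hfreq.exists
  have key : ∀ x, L n0 x ≤ ENNReal.ofReal (3 * δ) := by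
    intro x
    have hdist : dist (UniformFun.toFun c0 x) ((L n0 x).toReal) < δ := by
      rw [← hn0]
      have := hc n0 x
      rwa [hKqeq n0 x] at this
    have hle : (L n0 x).toReal ≤ 3 * δ := by
      have h1 : (L n0 x).toReal ≤ |UniformFun.toFun c0 x| + δ := by
        rw [Real.dist_eq] at hdist
        have := abs_sub_abs_le_abs_sub ((L n0 x).toReal) (UniformFun.toFun c0 x)
        rw [abs_sub_comm] at hdist
        have h2 : |(L n0 x).toReal| = (L n0 x).toReal := abs_of_nonneg toReal_nonneg
        linarith
      linarith [hc0bd x]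
    exact (ENNReal.le_ofReal_iff_toReal_le (hLne n0 x) (by positivity)).mpr hle
  filter_upwards [eventually_ge_atTop n0] with n hn
  calc ⨆ x, L n x ≤ ENNReal.ofReal (3 * δ) :=
        iSup_le fun x => le_trans (lintegral_mono_set (hmono hn)) (key x)
    _ ≤ ε' := by
        have h3 : 3 * δ ≤ (min 1 ε').toReal := by rw [hδdef]; linarith [ENNReal.toReal_nonneg (a := min 1 ε')]
        calc ENNReal.ofReal (3 * δ) ≤ ENNReal.ofReal ((min 1 ε').toReal) :=
              ENNReal.ofReal_le_ofReal h3
          _ = min 1 ε' := ENNReal.ofReal_toReal hmin_ne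
          _ ≤ ε' := min_le_right _ _
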